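/- arXiv:2002.11852 — 3 statements merged into one kernel-verified Lean document; each statement's English description precedes it below -/
import Mathlib

section
/- Let ε > 0 and let u₀ : ℝ → ℝ be measurable and bounded, set W(y) := ∫₀^y u₀(z) dz, and define φ(x,t) := ∫_ℝ exp( −(x−y)²/(4εt) − W(y)/(2ε) ) dy for x ∈ ℝ, t > 0. Then for every x ∈ ℝ and t > 0, φ is differentiable with respect to x at (x,t) and ∂φ/∂x (x,t) = −(1/(2εt)) ∫_ℝ (x−y) · exp( −(x−y)²/(4εt) − W(y)/(2ε) ) dy. Consequently the Hopf quotient u(x,t) := [∫_ℝ (x−y) exp( −(x−y)²/(4εt) − W(y)/(2ε) ) dy] / [ t ∫_ℝ exp( −(x−y)²/(4εt) − W(y)/(2ε) ) dy ] equals −2ε (∂φ/∂x)(x,t)/φ(x,t). -/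
open MeasureTheory

/-- AM-GM style bound used for domination without the linear factor. -/
lemma gauss_aux0 (a b d u : ℝ) (ha : 0 < a) :
    Real.exp (-a * u ^ 2 + b * |u| + d) ≤
      Real.exp (b ^ 2 / (2 * a) + d) * Real.exp (-(a / 2) * u ^ 2) := by
  rw [← Real.exp_add]
  apply Real.exp_le_exp.mpr
  have h2 : b * |u| ≤ a / 2 * u ^ 2 + b ^ 2 / (2 * a) := by
    have key : a * (b * |u|) ≤ a * (a / 2 * u ^ 2) + b ^ 2 / 2 := by
      have k : ∀ w : ℝ, a * (b * w) ≤ a * (a / 2 * w ^ 2) + b ^ 2 / 2 := fun w => by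
        nlinarith [sq_nonneg (a * w - b)]
      have := k |u|; rwa [sq_abs] at this
    have := (div_le_div_iff_of_pos_right ha).mpr key
    calc b * |u| = a * (b * |u|) / a := by field_simp
      _ ≤ (a * (a / 2 * u ^ 2) + b ^ 2 / 2) / a := this
      _ = a / 2 * u ^ 2 + b ^ 2 / (2 * a) := by field_simp
  nlinarith [ha.le]

/-- AM-GM style bound used for domination with the linear factor. -/
lemma gauss_aux (a b d u v : ℝ) (ha : 0 < a) (huv : |v - u| ≤ 1) :
    |v| * Real.exp (-a * v ^ 2 + b * |u| + d) ≤
      Real.exp ((b + 1) ^ 2 / a + d + a) * Real.exp (-(a / 4) * u ^ 2) := by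
  have h0 : (v - u) ^ 2 ≤ 1 := by nlinarith [abs_nonneg (v - u), sq_abs (v - u)]
  have h1 : u ^ 2 / 2 - 1 ≤ v ^ 2 := by nlinarith [sq_nonneg (v - u/2), sq_nonneg (2*v - u)]
  have h1' : a * (u ^ 2 / 2 - 1) ≤ a * v ^ 2 := mul_le_mul_of_nonneg_left h1 ha.le
  have h2 : (b + 1) * |u| ≤ a / 4 * u ^ 2 + (b + 1) ^ 2 / a := by
    have key : a * ((b + 1) * |u|) ≤ a * (a / 4 * u ^ 2) + (b + 1) ^ 2 := by
      have k : ∀ w : ℝ, a * ((b + 1) * w) ≤ a * (a / 4 * w ^ 2) + (b + 1) ^ 2 := fun w => by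
        nlinarith [sq_nonneg (a * w / 2 - (b + 1))]
      have := k |u|; rwa [sq_abs] at this
    have := (div_le_div_iff_of_pos_right ha).mpr key
    calc (b + 1) * |u| = a * ((b + 1) * |u|) / a := by field_simp
      _ ≤ (a * (a / 4 * u ^ 2) + (b + 1) ^ 2) / a := this
      _ = a / 4 * u ^ 2 + (b + 1) ^ 2 / a := by field_simp
  calc |v| * Real.exp (-a * v ^ 2 + b * |u| + d)
      ≤ Real.exp |u| * Real.exp (-a * v ^ 2 + b * |u| + d) := by
        apply mul_le_mul_of_nonneg_right _ (Real.exp_pos _).le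
        have hv : |v| ≤ |u| + 1 := by
          have := abs_sub_abs_le_abs_sub v u
          linarith
        linarith [Real.add_one_le_exp |u|]
    _ = Real.exp (|u| + (-a * v ^ 2 + b * |u| + d)) := (Real.exp_add _ _).symm
    _ ≤ Real.exp ((b + 1) ^ 2 / a + d + a + -(a / 4) * u ^ 2) := by
        apply Real.exp_le_exp.mpr
        nlinarith
    _ = Real.exp ((b + 1) ^ 2 / a + d + a) * Real.exp (-(a / 4) * u ^ 2) :=
        Real.exp_add _ _

/-- Differentiation under the integral sign for the Cole–Hopf integral:
`∂φ/∂x (x,t) = -(1/(2εt)) ∫_ℝ (x-y) exp(-(x-y)²/(4εt) - W(y)/(2ε)) dy`,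
and consequently the Hopf quotient equals `-2ε φ_x/φ`. -/
theorem coleHopf_deriv_and_hopf_quotient (ε : ℝ) (hε : 0 < ε) (u₀ : ℝ → ℝ)
    (hmeas : Measurable u₀) (M : ℝ) (hbdd : ∀ z, |u₀ z| ≤ M)
    (W : ℝ → ℝ) (hW : ∀ y, W y = ∫ z in (0:ℝ)..y, u₀ z)
    (φ : ℝ → ℝ → ℝ)
    (hφ : ∀ (x t : ℝ), 0 < t → φ x t =
      ∫ y : ℝ, Real.exp (-(x - y) ^ 2 / (4 * ε * t) - W y / (2 * ε)))
    (x t : ℝ) (ht : 0 < t) :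
    HasDerivAt (fun x' => φ x' t)
      (-(1 / (2 * ε * t)) *
        ∫ y : ℝ, (x - y) * Real.exp (-(x - y) ^ 2 / (4 * ε * t) - W y / (2 * ε))) x ∧
    (∫ y : ℝ, (x - y) * Real.exp (-(x - y) ^ 2 / (4 * ε * t) - W y / (2 * ε))) /
        (t * ∫ y : ℝ, Real.exp (-(x - y) ^ 2 / (4 * ε * t) - W y / (2 * ε)))
      = -2 * ε * deriv (fun x' => φ x' t) x / φ x t := by
  have hε' : ε ≠ 0 := ne_of_gt hε
  have ht' : t ≠ 0 := ne_of_gt ht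
  have hεt : 0 < ε * t := mul_pos hε ht
  have hM0 : 0 ≤ M := le_trans (abs_nonneg _) (hbdd 0)
  -- continuity of W and the bound |W y| ≤ M |y|
  have hint : ∀ a b : ℝ, IntervalIntegrable u₀ volume a b := by
    intro a b
    rw [intervalIntegrable_iff]
    apply Measure.integrableOn_of_bounded (M := M) measure_Ioc_lt_top.ne
      hmeas.aestronglyMeasurable
    exact ae_of_all _ fun y => hbdd y
  have hWc : Continuous W := by
    have hWe : W = fun y => ∫ z in (0:ℝ)..y, u₀ z := funext hW
    rw [hWe]
    exact intervalIntegral.continuous_primitive hint 0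
  have hWbd : ∀ y, |W y| ≤ M * |y| := by
    intro y
    rw [hW y]
    calc |∫ z in (0:ℝ)..y, u₀ z| ≤ M * |y - 0| := by
          simpa using intervalIntegral.norm_integral_le_of_norm_le_const
            (a := 0) (b := y) (C := M) (f := u₀) fun z _ => by simpa using hbdd z
      _ = M * |y| := by rw [sub_zero]
  -- notation
  set a : ℝ := 1 / (4 * ε * t) with ha_def
  have ha : 0 < a := by positivity
  set b : ℝ := M / (2 * ε) with hb_def
  have hb : 0 ≤ b := by positivity
  set d : ℝ := M * |x| / (2 * ε) with hd_def
  set F : ℝ → ℝ → ℝ := fun x' y => Real.exp (-(x' - y) ^ 2 / (4 * ε * t) - W y / (2 * ε))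
    with hFdef
  set F' : ℝ → ℝ → ℝ := fun x' y =>
    (-(x' - y) / (2 * ε * t)) * Real.exp (-(x' - y) ^ 2 / (4 * ε * t) - W y / (2 * ε))
    with hF'def
  -- exponent bound
  have hexp : ∀ (x' y : ℝ),
      -(x' - y) ^ 2 / (4 * ε * t) - W y / (2 * ε) ≤
        -a * (x' - y) ^ 2 + b * |x - y| + d := by
    intro x' y
    have h1 : -(x' - y) ^ 2 / (4 * ε * t) = -a * (x' - y) ^ 2 := by
      rw [ha_def]; field_simp
    have h2 : -W y / (2 * ε) ≤ b * |x - y| + d := by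
      have hy : |y| ≤ |x - y| + |x| := by
        have := abs_sub_abs_le_abs_sub y x
        have h := abs_sub_comm y x
        calc |y| ≤ |y - x| + |x| := by nlinarith [abs_sub_abs_le_abs_sub y x]
          _ = |x - y| + |x| := by rw [abs_sub_comm]
      have h3 : -W y ≤ M * |y| := by
        have := hWbd y; have := neg_abs_le (W y); linarith
      have h4 : -W y ≤ M * (|x - y| + |x|) := by nlinarith
      calc -W y / (2 * ε) ≤ M * (|x - y| + |x|) / (2 * ε) :=
            (div_le_div_iff_of_pos_right (by positivity)).mpr h4
        _ = b * |x - y| + d := by rw [hb_def, hd_def]; ring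
    calc -(x' - y) ^ 2 / (4 * ε * t) - W y / (2 * ε)
        = -a * (x' - y) ^ 2 + -W y / (2 * ε) := by rw [h1]; ring
      _ ≤ -a * (x' - y) ^ 2 + (b * |x - y| + d) := by linarith
      _ = -a * (x' - y) ^ 2 + b * |x - y| + d := by ring
  -- Gaussian integrability
  have hgauss : ∀ k : ℝ, 0 < k → Integrable (fun y : ℝ => Real.exp (-k * (x - y) ^ 2)) := by
    intro k hk
    exact (integrable_exp_neg_mul_sq hk).comp_sub_left x
  -- continuity in y
  have hFcont : ∀ x' : ℝ, Continuous (F x') := fun x' =>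
    Real.continuous_exp.comp
      ((((continuous_const.sub continuous_id).pow 2).neg.div_const _).sub (hWc.div_const _))
  have hF'cont : Continuous (F' x) :=
    ((continuous_const.sub continuous_id).neg.div_const _).mul (hFcont x)
  -- integrability of F x
  have hFint : Integrable (F x) := by
    apply Integrable.mono'
      ((hgauss (a / 2) (by positivity)).const_mul (Real.exp (b ^ 2 / (2 * a) + d)))
      (hFcont x).aestronglyMeasurable
    refine ae_of_all _ fun y => ?_
    have h1 : F x y ≤ Real.exp (-a * (x - y) ^ 2 + b * |x - y| + d) :=
      Real.exp_le_exp.mpr (hexp x y)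
    have h2 := gauss_aux0 a b d (x - y) ha
    calc ‖F x y‖ = F x y := by rw [Real.norm_eq_abs, abs_of_pos (Real.exp_pos _)]
      _ ≤ Real.exp (-a * (x - y) ^ 2 + b * |x - y| + d) := h1
      _ ≤ Real.exp (b ^ 2 / (2 * a) + d) * Real.exp (-(a / 2) * (x - y) ^ 2) := h2
  -- the dominating function
  set bound : ℝ → ℝ := fun y =>
    Real.exp ((b + 1) ^ 2 / a + d + a) / (2 * ε * t) * Real.exp (-(a / 4) * (x - y) ^ 2)
    with hbound_def
  have hbound_int : Integrable bound :=
    (hgauss (a / 4) (by positivity)).const_mul _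
  have h_bound : ∀ y : ℝ, ∀ x' ∈ Metric.ball x 1, ‖F' x' y‖ ≤ bound y := by
    intro y x' hx'
    have hdist : |(x' - y) - (x - y)| ≤ 1 := by
      have : |x' - x| < 1 := by
        have := Metric.mem_ball.mp hx'
        rwa [Real.dist_eq] at this
      have he : (x' - y) - (x - y) = x' - x := by ring
      rw [he]; linarith
    have h1 : Real.exp (-(x' - y) ^ 2 / (4 * ε * t) - W y / (2 * ε)) ≤
        Real.exp (-a * (x' - y) ^ 2 + b * |x - y| + d) :=
      Real.exp_le_exp.mpr (hexp x' y)
    have h2 := gauss_aux a b d (x - y) (x' - y) ha hdist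
    have hpos : (0:ℝ) < 2 * ε * t := by positivity
    calc ‖F' x' y‖
        = |x' - y| / (2 * ε * t) *
            Real.exp (-(x' - y) ^ 2 / (4 * ε * t) - W y / (2 * ε)) := by
          rw [hF'def]
          rw [Real.norm_eq_abs, abs_mul, abs_of_pos (Real.exp_pos _), abs_div, abs_neg,
            abs_of_pos hpos]
      _ ≤ |x' - y| / (2 * ε * t) * Real.exp (-a * (x' - y) ^ 2 + b * |x - y| + d) := by
          apply mul_le_mul_of_nonneg_left h1 (by positivity)
      _ = 1 / (2 * ε * t) *
            (|x' - y| * Real.exp (-a * (x' - y) ^ 2 + b * |x - y| + d)) := by ring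
      _ ≤ 1 / (2 * ε * t) *
            (Real.exp ((b + 1) ^ 2 / a + d + a) * Real.exp (-(a / 4) * (x - y) ^ 2)) := by
          apply mul_le_mul_of_nonneg_left h2 (by positivity)
      _ = bound y := by rw [hbound_def]; ring
  -- differentiability in x'
  have h_diff : ∀ y : ℝ, ∀ x' ∈ Metric.ball x 1,
      HasDerivAt (fun x'' => F x'' y) (F' x' y) x' := by
    intro y x' _
    have h1 : HasDerivAt (fun x'' : ℝ => -(x'' - y) ^ 2 / (4 * ε * t) - W y / (2 * ε))
        (-(x' - y) / (2 * ε * t)) x' := by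
      have h2 := ((((hasDerivAt_id x').sub_const y).pow 2).neg.div_const
        (4 * ε * t)).sub_const (W y / (2 * ε))
      refine h2.congr_deriv ?_
      simp only [id]
      norm_num
      field_simp
      ring
    have h3 := h1.exp
    have h4 : F' x' y =
        Real.exp (-(x' - y) ^ 2 / (4 * ε * t) - W y / (2 * ε)) * (-(x' - y) / (2 * ε * t)) := by
      rw [hF'def]; ring
    rw [hFdef]
    simpa [h4] using h3
  -- apply differentiation under the integral sign
  have key := hasDerivAt_integral_of_dominated_loc_of_deriv_le (μ := volume) (F := F)
    (F' := F') (x₀ := x) (bound := bound) (Metric.ball_mem_nhds x one_pos)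
    (Filter.Eventually.of_forall fun x' => (hFcont x').aestronglyMeasurable)
    hFint hF'cont.aestronglyMeasurable (ae_of_all _ h_bound) hbound_int (ae_of_all _ h_diff)
  have heq : (fun x' => φ x' t) = fun x' => ∫ y : ℝ, F x' y :=
    funext fun x' => hφ x' t ht
  have hI : (∫ y : ℝ, F' x y) = -(1 / (2 * ε * t)) *
      ∫ y : ℝ, (x - y) * Real.exp (-(x - y) ^ 2 / (4 * ε * t) - W y / (2 * ε)) := by
    rw [← MeasureTheory.integral_const_mul]
    congr 1
    funext y
    rw [hF'def]
    ring
  have hD : HasDerivAt (fun x' => φ x' t)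
      (-(1 / (2 * ε * t)) *
        ∫ y : ℝ, (x - y) * Real.exp (-(x - y) ^ 2 / (4 * ε * t) - W y / (2 * ε))) x := by
    rw [heq, ← hI]
    exact key.2
  refine ⟨hD, ?_⟩
  rw [hD.deriv, hφ x t ht]
  set A := ∫ y : ℝ, (x - y) * Real.exp (-(x - y) ^ 2 / (4 * ε * t) - W y / (2 * ε)) with hA
  set B := ∫ y : ℝ, Real.exp (-(x - y) ^ 2 / (4 * ε * t) - W y / (2 * ε)) with hB
  have h5 : -2 * ε * (-(1 / (2 * ε * t)) * A) = A / t := by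
    field_simp
  rw [h5]
  exact (div_div A t B).symm
end

section
/- Let ε > 0 and let u₀ : ℝ → ℝ be continuous and bounded, and set W(y) := ∫₀^y u₀(z) dz. Define, for x ∈ ℝ and t > 0, u(x,t) := [∫_ℝ (x−y) exp( −(x−y)²/(4εt) − W(y)/(2ε) ) dy] / [ t ∫_ℝ exp( −(x−y)²/(4εt) − W(y)/(2ε) ) dy ]. Then u satisfies Burgers' equation ∂u/∂t + u ∂u/∂x = ε ∂²u/∂x² at every point of ℝ × (0,∞). -/
open MeasureTheory

open Real

lemma aux_int (k : ℕ) (a b c : ℝ) (ha : 0 ≤ a) (hc : 0 < c) :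
    Integrable (fun y : ℝ => (a + |y|) ^ k * Real.exp (b * |y| - c * y ^ 2)) := by
  have hcont : Continuous fun y : ℝ => (a + |y|) ^ k * Real.exp (b * |y| - c * y ^ 2) := by
    fun_prop
  refine Integrable.mono'
    (g := fun y => (k.factorial * Real.exp (a + (|b| + 1) ^ 2 / (2 * c))) *
      Real.exp (-(c / 2) * y ^ 2)) ((integrable_exp_neg_mul_sq (by positivity)).const_mul _)
    hcont.aestronglyMeasurable ?_
  filter_upwards with y
  rw [Real.norm_eq_abs, abs_of_nonneg (by positivity)]
  have h1 : (a + |y|) ^ k ≤ k.factorial * Real.exp (a + |y|) := by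
    have h := Real.pow_div_factorial_le_exp (x := a + |y|) (by positivity) k
    rw [div_le_iff₀ (by positivity : (0:ℝ) < k.factorial)] at h
    linarith
  have h2 : (a + |y|) ^ k * Real.exp (b * |y| - c * y ^ 2) ≤
      k.factorial * (Real.exp (a + |y|) * Real.exp (b * |y| - c * y ^ 2)) := by
    rw [← mul_assoc]
    exact mul_le_mul_of_nonneg_right h1 (Real.exp_pos _).le
  refine h2.trans ?_
  rw [← Real.exp_add, mul_assoc, ← Real.exp_add]
  refine mul_le_mul_of_nonneg_left (Real.exp_le_exp.mpr ?_) (by positivity)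
  have hby : b * |y| ≤ |b| * |y| := mul_le_mul_of_nonneg_right (le_abs_self b) (abs_nonneg y)
  have key : (|b| + 1) * |y| ≤ ((|b| + 1) ^ 2 + c ^ 2 * y ^ 2) / (2 * c) := by
    rw [le_div_iff₀ (by positivity)]
    nlinarith [sq_nonneg ((|b| + 1) - c * |y|), sq_abs y]
  have expand : ((|b| + 1) ^ 2 + c ^ 2 * y ^ 2) / (2 * c) =
      (|b| + 1) ^ 2 / (2 * c) + (c / 2) * y ^ 2 := by
    field_simp
  rw [expand] at key
  linarith

section Hopf
variable {ε M : ℝ} {u₀ W : ℝ → ℝ}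

noncomputable def hE (ε : ℝ) (W : ℝ → ℝ) (x t y : ℝ) : ℝ :=
  Real.exp (-(x - y) ^ 2 / (4 * ε * t) - W y / (2 * ε))

noncomputable def hphi (ε : ℝ) (W : ℝ → ℝ) (n : ℕ) (x t : ℝ) : ℝ :=
  ∫ y : ℝ, (x - y) ^ n * hE ε W x t y

lemma W_cont (hcont : Continuous u₀) (hW : ∀ y, W y = ∫ z in (0:ℝ)..y, u₀ z) :
    Continuous W := by
  have : W = fun y => ∫ z in (0:ℝ)..y, u₀ z := funext hW
  rw [this]
  exact intervalIntegral.continuous_primitive (fun a b => hcont.intervalIntegrable a b) 0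

lemma W_bound (hcont : Continuous u₀) (hbdd : ∀ z, |u₀ z| ≤ M)
    (hW : ∀ y, W y = ∫ z in (0:ℝ)..y, u₀ z) (y : ℝ) : |W y| ≤ M * |y| := by
  rw [hW]
  have h := intervalIntegral.norm_integral_le_of_norm_le_const
    (C := M) (f := u₀) (a := (0:ℝ)) (b := y) (fun z _ => hbdd z)
  simpa using h

lemma hE_cont (hWc : Continuous W) (x t : ℝ) (k : ℕ) :
    Continuous fun y => (x - y) ^ k * hE ε W x t y := by
  unfold hE; fun_prop

/-- master pointwise bound, uniform for `|x| ≤ |x₀|+1`, `t₀/2 ≤ t ≤ 3t₀/2`. -/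
lemma hE_bound (hε : 0 < ε) (hbM : ∀ y, |W y| ≤ M * |y|) {x₀ t₀ : ℝ} (ht₀ : 0 < t₀)
    {x t : ℝ} (y : ℝ) (hx : |x| ≤ |x₀| + 1) (ht1 : t₀ / 2 ≤ t) (ht2 : t ≤ 3 * t₀ / 2) :
    hE ε W x t y ≤ Real.exp ((|x₀| + 1) ^ 2 / (2 * ε * t₀)) *
      Real.exp ((M / (2 * ε)) * |y| - (1 / (12 * ε * t₀)) * y ^ 2) := by
  have htpos : 0 < t := lt_of_lt_of_le (by linarith) ht1
  rw [hE, ← Real.exp_add]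
  apply Real.exp_le_exp.mpr
  have e1 : -(x - y) ^ 2 / (4 * ε * t) ≤ (x ^ 2 - y ^ 2 / 2) / (4 * ε * t) := by
    apply div_le_div_of_nonneg_right ?_ (by positivity)
    nlinarith [sq_nonneg (x - y / 2)]
  have e2 : (x ^ 2 - y ^ 2 / 2) / (4 * ε * t) = x ^ 2 / (4 * ε * t) - y ^ 2 / (8 * ε * t) := by
    ring
  have e3 : x ^ 2 / (4 * ε * t) ≤ (|x₀| + 1) ^ 2 / (2 * ε * t₀) := by
    apply div_le_div₀ (by positivity) ?_ (by positivity) (by nlinarith)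
    calc x ^ 2 = |x| ^ 2 := (sq_abs x).symm
      _ ≤ (|x₀| + 1) ^ 2 := by nlinarith [abs_nonneg x]
  have e4 : -(y ^ 2 / (8 * ε * t)) ≤ -((1 / (12 * ε * t₀)) * y ^ 2) := by
    have : (1 / (12 * ε * t₀)) * y ^ 2 ≤ y ^ 2 / (8 * ε * t) := by
      rw [one_div, inv_mul_eq_div]
      exact div_le_div_of_nonneg_left (by positivity) (by positivity) (by nlinarith)
    linarith
  have e5 : -(W y / (2 * ε)) ≤ (M / (2 * ε)) * |y| := by
    rw [div_mul_eq_mul_div, ← neg_div]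
    apply div_le_div_of_nonneg_right ?_ (by positivity)
    have h1 := hbM y
    have h2 := neg_abs_le (W y)
    linarith
  have := e1.trans_eq e2
  linarith

lemma moment_bound (hε : 0 < ε) (hbM : ∀ y, |W y| ≤ M * |y|) {x₀ t₀ : ℝ} (ht₀ : 0 < t₀)
    {x t : ℝ} (k : ℕ) (y : ℝ) (hx : |x| ≤ |x₀| + 1) (ht1 : t₀ / 2 ≤ t) (ht2 : t ≤ 3 * t₀ / 2) :
    |(x - y) ^ k * hE ε W x t y| ≤ Real.exp ((|x₀| + 1) ^ 2 / (2 * ε * t₀)) *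
      ((|x₀| + 1 + |y|) ^ k *
        Real.exp ((M / (2 * ε)) * |y| - (1 / (12 * ε * t₀)) * y ^ 2)) := by
  rw [abs_mul, abs_pow]
  have h1 : |x - y| ^ k ≤ (|x₀| + 1 + |y|) ^ k := by
    apply pow_le_pow_left₀ (abs_nonneg _)
    calc |x - y| ≤ |x| + |y| := abs_sub _ _
      _ ≤ |x₀| + 1 + |y| := by linarith
  have h2 : |hE ε W x t y| ≤ Real.exp ((|x₀| + 1) ^ 2 / (2 * ε * t₀)) *
      Real.exp ((M / (2 * ε)) * |y| - (1 / (12 * ε * t₀)) * y ^ 2) := by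
    rw [hE, abs_of_pos (Real.exp_pos _), ← hE]
    exact hE_bound hε hbM ht₀ y hx ht1 ht2
  calc |x - y| ^ k * |hE ε W x t y| ≤ (|x₀| + 1 + |y|) ^ k *
        (Real.exp ((|x₀| + 1) ^ 2 / (2 * ε * t₀)) *
          Real.exp ((M / (2 * ε)) * |y| - (1 / (12 * ε * t₀)) * y ^ 2)) :=
      mul_le_mul h1 h2 (abs_nonneg _) (by positivity)
    _ = _ := by ring

lemma integrable_bnd (hε : 0 < ε) {x₀ t₀ : ℝ} (ht₀ : 0 < t₀) (k : ℕ) (C : ℝ) :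
    Integrable (fun y : ℝ => C *
      ((|x₀| + 1 + |y|) ^ k *
        Real.exp ((M / (2 * ε)) * |y| - (1 / (12 * ε * t₀)) * y ^ 2))) := by
  have := (aux_int k (|x₀| + 1) (M / (2 * ε)) (1 / (12 * ε * t₀))
    (by positivity) (by positivity)).const_mul C
  simpa [mul_assoc] using this

lemma integrable_moment (hε : 0 < ε) (hWc : Continuous W) (hbM : ∀ y, |W y| ≤ M * |y|)
    (k : ℕ) (x : ℝ) {t : ℝ} (ht : 0 < t) :
    Integrable fun y => (x - y) ^ k * hE ε W x t y := by
  refine Integrable.mono' (integrable_bnd hε ht (x₀ := x) (M := M) k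
      (Real.exp ((|x| + 1) ^ 2 / (2 * ε * t))))
    (hE_cont hWc x t k).aestronglyMeasurable ?_
  filter_upwards with y
  exact moment_bound hε hbM ht k y (by linarith [abs_nonneg x]) (by linarith) (by linarith)

lemma hasDerivAt_hphi_x (hε : 0 < ε) (hWc : Continuous W) (hbM : ∀ y, |W y| ≤ M * |y|)
    (n : ℕ) (x : ℝ) {t : ℝ} (ht : 0 < t) :
    HasDerivAt (fun x' => hphi ε W n x' t)
      ((n : ℝ) * hphi ε W (n - 1) x t - hphi ε W (n + 1) x t / (2 * ε * t)) x := by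
  set F' : ℝ → ℝ → ℝ := fun x' y =>
    (n : ℝ) * ((x' - y) ^ (n - 1) * hE ε W x' t y) -
      ((x' - y) ^ (n + 1) * hE ε W x' t y) / (2 * ε * t) with hF'
  have i1 := (integrable_moment hε hWc hbM (n - 1) x ht).const_mul (n : ℝ)
  have i2 := (integrable_moment hε hWc hbM (n + 1) x ht).div_const (2 * ε * t)
  have key := hasDerivAt_integral_of_dominated_loc_of_deriv_le (μ := volume) (x₀ := x)
    (F := fun x' y => (x' - y) ^ n * hE ε W x' t y) (F' := F')
    (bound := fun y => ((n : ℝ) + 1 / (2 * ε * t)) *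
      (Real.exp ((|x| + 1) ^ 2 / (2 * ε * t)) *
        ((|x| + 1 + |y|) ^ (n + 1) *
          Real.exp ((M / (2 * ε)) * |y| - (1 / (12 * ε * t)) * y ^ 2))))
    (Metric.ball_mem_nhds x one_pos)
    (Filter.Eventually.of_forall fun x' => (hE_cont hWc x' t n).aestronglyMeasurable)
    (integrable_moment hε hWc hbM n x ht)
    (i1.sub i2).aestronglyMeasurable
    ?_ ?_ ?_
  · have heq : (n : ℝ) * hphi ε W (n - 1) x t - hphi ε W (n + 1) x t / (2 * ε * t)
        = ∫ y, F' x y := by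
      simp only [hphi, hF']
      rw [← integral_const_mul, ← integral_div, ← integral_sub i1 i2]
    rw [heq]
    simp only [hphi]
    exact key.2
  · -- bound
    filter_upwards with y
    intro x' hx'
    have hx'abs : |x'| ≤ |x| + 1 := by
      have h1 := mem_ball_iff_norm.mp hx'
      rw [Real.norm_eq_abs] at h1
      have h2 := abs_sub_abs_le_abs_sub x' x
      linarith
    have hb1 := moment_bound hε hbM (x₀ := x) (t₀ := t) (x := x') (t := t) ht (n - 1) y
      hx'abs (by linarith) (by linarith)
    have hb2 := moment_bound hε hbM (x₀ := x) (t₀ := t) (x := x') (t := t) ht (n + 1) y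
      hx'abs (by linarith) (by linarith)
    set C := Real.exp ((|x| + 1) ^ 2 / (2 * ε * t)) with hC
    set e := Real.exp ((M / (2 * ε)) * |y| - (1 / (12 * ε * t)) * y ^ 2) with he
    set a := |x| + 1 with ha
    have ha1 : (1:ℝ) ≤ a + |y| := by
      rw [ha]; have := abs_nonneg x; have := abs_nonneg y; linarith
    have hmono : (a + |y|) ^ (n - 1) ≤ (a + |y|) ^ (n + 1) :=
      pow_le_pow_right₀ ha1 (by omega)
    have hC0 : 0 < C := Real.exp_pos _
    have he0 : 0 < e := Real.exp_pos _
    have key1 : |(x' - y) ^ (n - 1) * hE ε W x' t y| ≤ C * ((a + |y|) ^ (n + 1) * e) := by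
      refine hb1.trans ?_
      gcongr
    have key2 : |(x' - y) ^ (n + 1) * hE ε W x' t y| ≤ C * ((a + |y|) ^ (n + 1) * e) := hb2
    have h2et : (0:ℝ) < 2 * ε * t := by positivity
    have step1 : ‖F' x' y‖ ≤ (n : ℝ) * |(x' - y) ^ (n - 1) * hE ε W x' t y| +
        |(x' - y) ^ (n + 1) * hE ε W x' t y| / (2 * ε * t) := by
      rw [hF', Real.norm_eq_abs]
      refine (abs_sub _ _).trans (le_of_eq ?_)
      rw [abs_mul, abs_div, Nat.abs_cast, abs_of_pos h2et]
    have step2 : (n : ℝ) * |(x' - y) ^ (n - 1) * hE ε W x' t y| +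
        |(x' - y) ^ (n + 1) * hE ε W x' t y| / (2 * ε * t) ≤
        (n : ℝ) * (C * ((a + |y|) ^ (n + 1) * e)) +
          (C * ((a + |y|) ^ (n + 1) * e)) / (2 * ε * t) := by
      refine add_le_add (mul_le_mul_of_nonneg_left key1 (Nat.cast_nonneg n)) ?_
      exact (div_le_div_iff_of_pos_right h2et).mpr key2
    refine (step1.trans step2).trans (le_of_eq (by ring))
  · -- bound integrable
    exact (integrable_bnd hε (x₀ := x) (M := M) ht (n + 1)
      (Real.exp ((|x| + 1) ^ 2 / (2 * ε * t)))).const_mul _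
  · -- differentiability
    filter_upwards with y
    intro x' _
    have hsub : HasDerivAt (fun x'' : ℝ => x'' - y) 1 x' := (hasDerivAt_id x').sub_const y
    have hpow : HasDerivAt (fun x'' : ℝ => (x'' - y) ^ n)
        ((n : ℝ) * (x' - y) ^ (n - 1) * 1) x' := hsub.pow n
    have hinner : HasDerivAt
        (fun x'' : ℝ => -(x'' - y) ^ 2 / (4 * ε * t) - W y / (2 * ε))
        (-(2 * (x' - y) ^ (2 - 1) * 1) / (4 * ε * t)) x' :=
      ((hsub.pow 2).neg.div_const (4 * ε * t)).sub_const _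
    have hexp := hinner.exp
    have hprod := hpow.mul hexp
    simp only [hE]
    refine hprod.congr_deriv ?_
    simp only [hF', hE]
    ring

lemma hasDerivAt_hphi_t (hε : 0 < ε) (hWc : Continuous W) (hbM : ∀ y, |W y| ≤ M * |y|)
    (n : ℕ) (x : ℝ) {t : ℝ} (ht : 0 < t) :
    HasDerivAt (fun t' => hphi ε W n x t')
      (hphi ε W (n + 2) x t / (4 * ε * t ^ 2)) t := by
  set F' : ℝ → ℝ → ℝ := fun t' y =>
    ((x - y) ^ (n + 2) * hE ε W x t' y) / (4 * ε * t' ^ 2) with hF'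
  have i1 := (integrable_moment hε hWc hbM (n + 2) x ht).div_const (4 * ε * t ^ 2)
  have key := hasDerivAt_integral_of_dominated_loc_of_deriv_le (μ := volume) (x₀ := t)
    (F := fun t' y => (x - y) ^ n * hE ε W x t' y) (F' := F')
    (bound := fun y => (1 / (ε * t ^ 2)) *
      (Real.exp ((|x| + 1) ^ 2 / (2 * ε * t)) *
        ((|x| + 1 + |y|) ^ (n + 2) *
          Real.exp ((M / (2 * ε)) * |y| - (1 / (12 * ε * t)) * y ^ 2))))
    (Metric.ball_mem_nhds t (by positivity : (0:ℝ) < t / 2))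
    ?_ (integrable_moment hε hWc hbM n x ht) i1.aestronglyMeasurable ?_ ?_ ?_
  · have heq : hphi ε W (n + 2) x t / (4 * ε * t ^ 2) = ∫ y, F' t y := by
      simp only [hphi, hF']
      rw [← integral_div]
    rw [heq]
    simp only [hphi]
    exact key.2
  · -- measurability of F t' in y near t
    filter_upwards [eventually_mem_nhds_iff.mpr (Metric.ball_mem_nhds t (by positivity :
        (0:ℝ) < t / 2))] with t' ht'
    exact (hE_cont hWc x t' n).aestronglyMeasurable
  · -- bound
    filter_upwards with y
    intro t' ht'
    have htd : |t' - t| < t / 2 := by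
      have := mem_ball_iff_norm.mp ht'
      rwa [Real.norm_eq_abs] at this
    have h1 : t / 2 ≤ t' := by
      have := abs_lt.mp htd
      linarith [this.1]
    have h2 : t' ≤ 3 * t / 2 := by
      have := abs_lt.mp htd
      linarith [this.2]
    have hb := moment_bound hε hbM (x₀ := x) (t₀ := t) (x := x) (t := t') ht (n + 2) y
      (by linarith [abs_nonneg x]) h1 h2
    have ht'pos : 0 < t' := by linarith
    have hden : (0:ℝ) < 4 * ε * t' ^ 2 := by positivity
    have hdencmp : (1:ℝ) / (4 * ε * t' ^ 2) ≤ 1 / (ε * t ^ 2) := by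
      apply div_le_div_of_nonneg_left one_pos.le (by positivity)
      have hsq := mul_le_mul h1 h1 (by linarith) ht'pos.le
      nlinarith [hsq, hε]
    have hnn : (0:ℝ) ≤ |(x - y) ^ (n + 2) * hE ε W x t' y| := abs_nonneg _
    have hEb : (0:ℝ) ≤ Real.exp ((|x| + 1) ^ 2 / (2 * ε * t)) *
        ((|x| + 1 + |y|) ^ (n + 2) *
          Real.exp ((M / (2 * ε)) * |y| - (1 / (12 * ε * t)) * y ^ 2)) := by positivity
    have : ‖F' t' y‖ = |(x - y) ^ (n + 2) * hE ε W x t' y| / (4 * ε * t' ^ 2) := by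
      rw [hF', Real.norm_eq_abs, abs_div, abs_of_pos hden]
    rw [this]
    calc |(x - y) ^ (n + 2) * hE ε W x t' y| / (4 * ε * t' ^ 2)
        = |(x - y) ^ (n + 2) * hE ε W x t' y| * (1 / (4 * ε * t' ^ 2)) := by ring
      _ ≤ (Real.exp ((|x| + 1) ^ 2 / (2 * ε * t)) *
            ((|x| + 1 + |y|) ^ (n + 2) *
              Real.exp ((M / (2 * ε)) * |y| - (1 / (12 * ε * t)) * y ^ 2))) *
            (1 / (ε * t ^ 2)) := by
          exact mul_le_mul hb hdencmp (by positivity) hEb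
      _ = _ := by ring
  · -- bound integrable
    exact (integrable_bnd hε (x₀ := x) (M := M) ht (n + 2)
      (Real.exp ((|x| + 1) ^ 2 / (2 * ε * t)))).const_mul _
  · -- differentiability
    filter_upwards with y
    intro t' ht'
    have htd := abs_lt.mp (by rwa [mem_ball_iff_norm, Real.norm_eq_abs] at ht')
    have ht'pos : 0 < t' := by linarith [htd.1]
    have hden : HasDerivAt (fun t'' : ℝ => 4 * ε * t'') (4 * ε) t' := by
      simpa using (hasDerivAt_id t').const_mul (4 * ε)
    have hdiv : HasDerivAt (fun t'' : ℝ => -(x - y) ^ 2 / (4 * ε * t''))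
        ((0 * (4 * ε * t') - -(x - y) ^ 2 * (4 * ε)) / (4 * ε * t') ^ 2) t' :=
      (hasDerivAt_const t' (-(x - y) ^ 2)).div hden (by positivity)
    have hexp := (hdiv.sub_const (W y / (2 * ε))).exp
    have hprod := hexp.const_mul ((x - y) ^ n)
    simp only [hE]
    refine hprod.congr_deriv ?_
    simp only [hF', hE]
    field_simp
    ring

lemma hphi0_pos (hε : 0 < ε) (hWc : Continuous W) (hbM : ∀ y, |W y| ≤ M * |y|)
    (x : ℝ) {t : ℝ} (ht : 0 < t) : 0 < hphi ε W 0 x t := by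
  rw [hphi]
  have hi := integrable_moment hε hWc hbM 0 x ht
  have hpos : ∀ y : ℝ, 0 < (x - y) ^ 0 * hE ε W x t y := fun y => by
    rw [pow_zero, one_mul, hE]; exact Real.exp_pos _
  refine (integral_pos_iff_support_of_nonneg (fun y => (hpos y).le) hi).2 ?_
  have hs : Function.support (fun y => (x - y) ^ 0 * hE ε W x t y) = Set.univ :=
    Set.eq_univ_iff_forall.mpr fun y => Function.mem_support.mpr (hpos y).ne'
  rw [hs]
  simp

end Hopf

/-- The Hopf exact-solution formula
`u(x,t) = [∫_ℝ (x-y) exp(-(x-y)²/(4εt) - W(y)/(2ε)) dy] /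
          [t ∫_ℝ exp(-(x-y)²/(4εt) - W(y)/(2ε)) dy]`
satisfies Burgers' equation `u_t + u u_x = ε u_xx` on `ℝ × (0,∞)`. -/
theorem hopf_formula_solves_burgers (ε : ℝ) (hε : 0 < ε) (u₀ : ℝ → ℝ)
    (hcont : Continuous u₀) (M : ℝ) (hbdd : ∀ z, |u₀ z| ≤ M)
    (W : ℝ → ℝ) (hW : ∀ y, W y = ∫ z in (0:ℝ)..y, u₀ z)
    (u : ℝ → ℝ → ℝ)
    (hu : ∀ (x t : ℝ), 0 < t → u x t =
      (∫ y : ℝ, (x - y) * Real.exp (-(x - y) ^ 2 / (4 * ε * t) - W y / (2 * ε))) /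
        (t * ∫ y : ℝ, Real.exp (-(x - y) ^ 2 / (4 * ε * t) - W y / (2 * ε)))) :
    ∀ x t : ℝ, 0 < t →
      deriv (fun τ => u x τ) t + u x t * deriv (fun y => u y t) x
        = ε * deriv (deriv fun y => u y t) x := by
  intro x t ht
  have hWc : Continuous W := W_cont hcont hW
  have hbM : ∀ y, |W y| ≤ M * |y| := W_bound hcont hbdd hW
  have htne : t ≠ 0 := ne_of_gt ht
  have hFpos : ∀ x' : ℝ, 0 < hphi ε W 0 x' t := fun x' => hphi0_pos hε hWc hbM x' ht
  have hu_eq : ∀ x' t' : ℝ, 0 < t' →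
      u x' t' = hphi ε W 1 x' t' / (t' * hphi ε W 0 x' t') := by
    intro x' t' ht'
    rw [hu x' t' ht']
    simp only [hphi, hE, pow_one, pow_zero, one_mul]
  set Ux : ℝ → ℝ := fun x' =>
    ((hphi ε W 0 x' t - hphi ε W 2 x' t / (2 * ε * t)) * (t * hphi ε W 0 x' t) +
      t * hphi ε W 1 x' t * hphi ε W 1 x' t / (2 * ε * t)) /
        (t * hphi ε W 0 x' t) ^ 2 with hUxdef
  have hUxAt : ∀ x' : ℝ,
      HasDerivAt (fun y => hphi ε W 1 y t / (t * hphi ε W 0 y t)) (Ux x') x' := by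
    intro x'
    have h := (hasDerivAt_hphi_x hε hWc hbM 1 x' ht).div
      ((hasDerivAt_hphi_x hε hWc hbM 0 x' ht).const_mul t)
      (mul_ne_zero htne (hFpos x').ne')
    refine h.congr_deriv ?_
    rw [hUxdef]
    norm_num
    ring
  have hfun : (fun y => u y t) = fun y => hphi ε W 1 y t / (t * hphi ε W 0 y t) :=
    funext fun y => hu_eq y t ht
  have hderivx : deriv (fun y => hphi ε W 1 y t / (t * hphi ε W 0 y t)) = Ux :=
    funext fun x' => (hUxAt x').deriv
  -- time derivative
  have hqt := (hasDerivAt_hphi_t hε hWc hbM 1 x ht).div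
    ((hasDerivAt_id t).mul (hasDerivAt_hphi_t hε hWc hbM 0 x ht))
    (mul_ne_zero htne (hFpos x).ne')
  have e_t : HasDerivAt (fun τ => hphi ε W 1 x τ / (τ * hphi ε W 0 x τ))
      ((hphi ε W 3 x t / (4 * ε * t ^ 2) * (t * hphi ε W 0 x t) -
        hphi ε W 1 x t * (hphi ε W 0 x t + t * (hphi ε W 2 x t / (4 * ε * t ^ 2)))) /
        (t * hphi ε W 0 x t) ^ 2) t := by
    refine hqt.congr_deriv ?_
    norm_num
  have hdt : deriv (fun τ => u x τ) t =
      deriv (fun τ => hphi ε W 1 x τ / (τ * hphi ε W 0 x τ)) t := by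
    apply Filter.EventuallyEq.deriv_eq
    filter_upwards [eventually_gt_nhds ht] with τ hτ
    exact hu_eq x τ hτ
  -- second space derivative
  have h0 := hasDerivAt_hphi_x hε hWc hbM 0 x ht
  have h1 := hasDerivAt_hphi_x hε hWc hbM 1 x ht
  have h2 := hasDerivAt_hphi_x hε hWc hbM 2 x ht
  have hA := ((h0.sub (h2.div_const (2 * ε * t))).mul (h0.const_mul t)).add
    (((h1.const_mul t).mul h1).div_const (2 * ε * t))
  have hB := (h0.const_mul t).pow 2
  have hBne : (t * hphi ε W 0 x t) ^ 2 ≠ 0 :=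
    pow_ne_zero 2 (mul_ne_zero htne (hFpos x).ne')
  have e_xx : HasDerivAt Ux
      ((((-(hphi ε W 1 x t / (2 * ε * t)) -
            (2 * hphi ε W 1 x t - hphi ε W 3 x t / (2 * ε * t)) / (2 * ε * t)) *
              (t * hphi ε W 0 x t) +
          (hphi ε W 0 x t - hphi ε W 2 x t / (2 * ε * t)) *
              (t * (-(hphi ε W 1 x t / (2 * ε * t)))) +
          ((t * (hphi ε W 0 x t - hphi ε W 2 x t / (2 * ε * t))) * hphi ε W 1 x t +
            (t * hphi ε W 1 x t) * (hphi ε W 0 x t - hphi ε W 2 x t / (2 * ε * t))) /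
              (2 * ε * t)) * (t * hphi ε W 0 x t) ^ 2 -
        ((hphi ε W 0 x t - hphi ε W 2 x t / (2 * ε * t)) * (t * hphi ε W 0 x t) +
          t * hphi ε W 1 x t * hphi ε W 1 x t / (2 * ε * t)) *
          (2 * (t * hphi ε W 0 x t) * (t * (-(hphi ε W 1 x t / (2 * ε * t)))))) /
        ((t * hphi ε W 0 x t) ^ 2) ^ 2) x := by
    rw [hUxdef]
    refine (hA.div hB hBne).congr_deriv ?_
    norm_num
  rw [hfun, hderivx, hu_eq x t ht, hdt, e_t.deriv, e_xx.deriv, hUxdef]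
  have hFne : hphi ε W 0 x t ≠ 0 := (hFpos x).ne'
  have hεne : ε ≠ 0 := hε.ne'
  field_simp
  ring
end

section
/- Let ε > 0 and let u₀ : ℝ → ℝ be measurable and bounded, set W(y) := ∫₀^y u₀(z) dz, and define for x ∈ ℝ and t > 0 the Hopf quotient u(x,t) := [∫_ℝ (x−y) exp( −(x−y)²/(4εt) − W(y)/(2ε) ) dy] / [ t ∫_ℝ exp( −(x−y)²/(4εt) − W(y)/(2ε) ) dy ]. If x₀ ∈ ℝ is a point at which u₀ is continuous, then u(x₀, t) → u₀(x₀) as t → 0⁺. -/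
open MeasureTheory Filter Topology


theorem hopf_exp_sub_one (x : ℝ) : |Real.exp x - 1| ≤ |x| * Real.exp |x| := by
  rcases le_or_gt x 0 with h | h
  · have h1 : Real.exp x ≤ 1 := Real.exp_le_one_iff.mpr h
    have h2 : x + 1 ≤ Real.exp x := Real.add_one_le_exp x
    have h3 : (1:ℝ) ≤ Real.exp |x| := Real.one_le_exp (abs_nonneg x)
    rw [abs_of_nonpos (by linarith)]
    have : -x ≤ |x| := neg_le_abs x
    nlinarith [abs_nonneg x]
  · have h2 : -x + 1 ≤ Real.exp (-x) := Real.add_one_le_exp (-x)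
    have h4 : Real.exp (-x) * Real.exp x = 1 := by
      rw [← Real.exp_add]; simp
    rw [abs_of_nonneg (by nlinarith [Real.exp_pos x, Real.one_le_exp h.le] : (0:ℝ) ≤ Real.exp x - 1),
      abs_of_pos h]
    nlinarith [Real.exp_pos x]

theorem hopf_pow_integrable {b : ℝ} (hb : 0 < b) (n : ℕ) :
    Integrable (fun x : ℝ => |x| ^ n * Real.exp (-b * x ^ 2)) := by
  have h1 : Integrable (fun x : ℝ => x ^ n * Real.exp (-b * x ^ 2)) := by
    have := integrable_rpow_mul_exp_neg_mul_sq hb (s := (n : ℝ))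
      (by exact_mod_cast lt_of_lt_of_le neg_one_lt_zero (Nat.cast_nonneg n))
    simpa [Real.rpow_natCast] using this
  have := h1.abs
  refine this.congr ?_
  filter_upwards with x
  rw [abs_mul, abs_pow, abs_of_nonneg (Real.exp_pos _).le]

theorem hopf_master_integrable {b : ℝ} (hb : 0 < b) (c : ℝ) (n : ℕ) :
    Integrable (fun w : ℝ => |w| ^ n * Real.exp (-b * w ^ 2 + c * |w|)) := by
  have h2 : Integrable (fun w : ℝ =>
      Real.exp (c ^ 2 / (2 * b)) * (|w| ^ n * Real.exp (-(b / 2) * w ^ 2))) :=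
    (hopf_pow_integrable (half_pos hb) n).const_mul _
  refine h2.mono' ?_ ?_
  · apply Continuous.aestronglyMeasurable
    fun_prop
  · filter_upwards with w
    have h2b : (0:ℝ) < 2 * b := by linarith
    have hdm : c ^ 2 / (2 * b) * (2 * b) = c ^ 2 := div_mul_cancel₀ _ h2b.ne'
    have key : -b * w ^ 2 + c * |w| ≤ c ^ 2 / (2 * b) + -(b / 2) * w ^ 2 := by
      have heq : (c ^ 2 / (2 * b) + (b / 2) * w ^ 2) * (2 * b) = c ^ 2 + b ^ 2 * w ^ 2 := by
        field_simp
      have h6 : c * |w| * (2 * b) ≤ (c ^ 2 / (2 * b) + (b / 2) * w ^ 2) * (2 * b) := by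
        rw [heq]; nlinarith [sq_nonneg (b * |w| - c), sq_abs w]
      have h7 := le_of_mul_le_mul_right h6 h2b
      linarith
    have : Real.exp (-b * w ^ 2 + c * |w|) ≤
        Real.exp (c ^ 2 / (2 * b)) * Real.exp (-(b / 2) * w ^ 2) := by
      rw [← Real.exp_add]; exact Real.exp_le_exp.mpr key
    rw [Real.norm_eq_abs, abs_of_nonneg (by positivity)]
    calc |w| ^ n * Real.exp (-b * w ^ 2 + c * |w|)
        ≤ |w| ^ n * (Real.exp (c ^ 2 / (2 * b)) * Real.exp (-(b / 2) * w ^ 2)) := by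
          exact mul_le_mul_of_nonneg_left this (by positivity)
      _ = Real.exp (c ^ 2 / (2 * b)) * (|w| ^ n * Real.exp (-(b / 2) * w ^ 2)) := by ring

theorem hopf_gauss_tendsto {b : ℝ} (hb : 0 < b) :
    Tendsto (fun x : ℝ => -(2 * b)⁻¹ * Real.exp (-b * x ^ 2)) atTop (𝓝 0) ∧
    Tendsto (fun x : ℝ => -(2 * b)⁻¹ * Real.exp (-b * x ^ 2)) atBot (𝓝 0) := by
  have h1 : Tendsto (fun x : ℝ => x ^ 2) atTop atTop := tendsto_pow_atTop two_ne_zero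
  have h2 : Tendsto (fun x : ℝ => x ^ 2) atBot atTop := by
    simpa [Function.comp_def, neg_sq] using h1.comp tendsto_neg_atBot_atTop
  have key : ∀ (l : Filter ℝ), Tendsto (fun x : ℝ => x ^ 2) l atTop →
      Tendsto (fun x : ℝ => -(2 * b)⁻¹ * Real.exp (-b * x ^ 2)) l (𝓝 0) := by
    intro l hl
    have h3 : Tendsto (fun x : ℝ => -b * x ^ 2) l atBot := by
      simpa [Function.comp_def, neg_mul] using tendsto_neg_atTop_atBot.comp (hl.const_mul_atTop hb)
    have h4 : Tendsto (fun x : ℝ => Real.exp (-b * x ^ 2)) l (𝓝 0) := by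
      simpa [Function.comp_def] using Real.tendsto_exp_atBot.comp h3
    simpa using h4.const_mul (-(2 * b)⁻¹)
  exact ⟨key _ h1, key _ h2⟩

theorem hopf_gauss_hasDeriv {b : ℝ} (x : ℝ) :
    HasDerivAt (fun x : ℝ => -(2 * b)⁻¹ * Real.exp (-b * x ^ 2))
      (b / b * (x * Real.exp (-b * x ^ 2))) x := by
  have h1 : HasDerivAt (fun x : ℝ => -b * x ^ 2) (-b * (2 * x)) x := by
    simpa using (hasDerivAt_pow 2 x).const_mul (-b)
  have h2 := (h1.exp).const_mul (-(2 * b)⁻¹)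
  refine h2.congr_deriv ?_
  ring

theorem hopf_moment1 {b : ℝ} (hb : 0 < b) : ∫ x : ℝ, x * Real.exp (-b * x ^ 2) = 0 := by
  have hderiv : ∀ x : ℝ, HasDerivAt (fun x : ℝ => -(2 * b)⁻¹ * Real.exp (-b * x ^ 2))
      (x * Real.exp (-b * x ^ 2)) x := by
    intro x
    have := hopf_gauss_hasDeriv (b := b) x
    rwa [div_self hb.ne', one_mul] at this
  have := integral_of_hasDerivAt_of_tendsto hderiv (integrable_mul_exp_neg_mul_sq hb)
    (hopf_gauss_tendsto hb).2 (hopf_gauss_tendsto hb).1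
  simpa using this

theorem hopf_moment2 {b : ℝ} (hb : 0 < b) :
    ∫ x : ℝ, x ^ 2 * Real.exp (-b * x ^ 2)
      = (2 * b)⁻¹ * ∫ x : ℝ, Real.exp (-b * x ^ 2) := by
  have hderiv : ∀ x : ℝ, HasDerivAt (fun x : ℝ => -(2 * b)⁻¹ * Real.exp (-b * x ^ 2))
      (x * Real.exp (-b * x ^ 2)) x := by
    intro x
    have := hopf_gauss_hasDeriv (b := b) x
    rwa [div_self hb.ne', one_mul] at this
  have hu : ∀ x : ℝ, HasDerivAt (fun x : ℝ => x) 1 x := fun x => hasDerivAt_id x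
  have hsq : Integrable (fun x : ℝ => x ^ 2 * Real.exp (-b * x ^ 2)) := by
    have := hopf_pow_integrable hb 2
    refine this.congr ?_
    filter_upwards with x
    rw [sq_abs]
  have huv' : Integrable ((fun x : ℝ => x) * fun x => x * Real.exp (-b * x ^ 2)) := by
    refine hsq.congr ?_
    filter_upwards with x
    simp [Pi.mul_apply]; ring
  have hu'v : Integrable ((fun _ : ℝ => (1:ℝ)) * fun x => -(2 * b)⁻¹ * Real.exp (-b * x ^ 2)) := by
    refine ((integrable_exp_neg_mul_sq hb).const_mul (-(2 * b)⁻¹)).congr ?_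
    filter_upwards with x
    simp [Pi.mul_apply]
  have huv : Integrable ((fun x : ℝ => x) * fun x => -(2 * b)⁻¹ * Real.exp (-b * x ^ 2)) := by
    refine ((integrable_mul_exp_neg_mul_sq hb).const_mul (-(2 * b)⁻¹)).congr ?_
    filter_upwards with x
    simp [Pi.mul_apply]; ring
  have := integral_mul_deriv_eq_deriv_mul_of_integrable (fun x _ => hu x) (fun x _ => hderiv x) huv' hu'v huv
  -- this : ∫ x, x * (x * exp (-b x²)) = - ∫ x, 1 * (-(2b)⁻¹ * exp (-b x²))
  have e1 : ∫ x : ℝ, x * (x * Real.exp (-b * x ^ 2)) = ∫ x : ℝ, x ^ 2 * Real.exp (-b * x ^ 2) := by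
    congr 1; funext x; ring
  have e2 : ∫ x : ℝ, (1:ℝ) * (-(2 * b)⁻¹ * Real.exp (-b * x ^ 2))
      = -(2 * b)⁻¹ * ∫ x : ℝ, Real.exp (-b * x ^ 2) := by
    simp only [one_mul]
    exact integral_const_mul _ _
  rw [e1, e2] at this
  rw [this]; ring

/-- The Hopf exact-solution formula attains the initial condition:
at every continuity point `x₀` of the bounded measurable initial datum `u₀`,
`u(x₀, t) → u₀(x₀)` as `t → 0⁺`. -/
theorem hopf_formula_initial_condition (ε : ℝ) (hε : 0 < ε) (u₀ : ℝ → ℝ)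
    (hmeas : Measurable u₀) (M : ℝ) (hbdd : ∀ z, |u₀ z| ≤ M)
    (W : ℝ → ℝ) (hW : ∀ y, W y = ∫ z in (0:ℝ)..y, u₀ z)
    (u : ℝ → ℝ → ℝ)
    (hu : ∀ (x t : ℝ), 0 < t → u x t =
      (∫ y : ℝ, (x - y) * Real.exp (-(x - y) ^ 2 / (4 * ε * t) - W y / (2 * ε))) /
        (t * ∫ y : ℝ, Real.exp (-(x - y) ^ 2 / (4 * ε * t) - W y / (2 * ε))))
    (x₀ : ℝ) (hx₀ : ContinuousAt u₀ x₀) :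
    Tendsto (fun t => u x₀ t) (nhdsWithin 0 (Set.Ioi 0)) (nhds (u₀ x₀)) := by
  have hM0 : 0 ≤ M := le_trans (abs_nonneg _) (hbdd 0)
  have hε2 : (0:ℝ) < 2 * ε := by linarith
  set b : ℝ := (4 * ε)⁻¹ with hbdef
  have hb : 0 < b := by rw [hbdef]; positivity
  have hexp : ∀ w : ℝ, -w ^ 2 / (4 * ε) = -b * w ^ 2 := fun w => by rw [hbdef]; ring
  -- interval integrability of u₀
  have hu₀int : ∀ p q : ℝ, IntervalIntegrable u₀ volume p q := by
    intro p q
    rw [intervalIntegrable_iff]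
    have hconst : IntegrableOn (fun _ : ℝ => M) (Set.uIoc p q) volume :=
      integrableOn_const measure_Ioc_lt_top.ne
    exact hconst.mono' hmeas.aestronglyMeasurable.restrict
      (ae_of_all _ fun x => by simpa [Real.norm_eq_abs] using hbdd x)
  -- Lipschitz bound for W
  have hWlip : ∀ p q : ℝ, |W p - W q| ≤ M * |p - q| := by
    intro p q
    have hsub : W p - W q = ∫ z in q..p, u₀ z := by
      rw [hW p, hW q, ← intervalIntegral.integral_interval_sub_left (hu₀int 0 p) (hu₀int 0 q)]
    rw [hsub]
    have := intervalIntegral.norm_integral_le_of_norm_le_const (C := M) (f := u₀)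
      (a := q) (b := p) (fun x _ => by simpa [Real.norm_eq_abs] using hbdd x)
    simpa [Real.norm_eq_abs, abs_sub_comm] using this
  have hWcont : Continuous W := by
    have : LipschitzWith ⟨M, hM0⟩ W := LipschitzWith.of_dist_le_mul (fun p q => by
      rw [Real.dist_eq, Real.dist_eq]; exact hWlip p q)
    exact this.continuous
  -- derivative of W at x₀
  have hWd : HasDerivAt W (u₀ x₀) x₀ := by
    have h := intervalIntegral.integral_hasDerivAt_right (hu₀int 0 x₀)
      hmeas.stronglyMeasurable.stronglyMeasurableAtFilter hx₀
    have hWe : W = fun r => ∫ z in (0:ℝ)..r, u₀ z := funext hW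
    rw [hWe]; exact h
  set a : ℝ := u₀ x₀ with ha
  set V : ℝ → ℝ → ℝ := fun s w => (W (x₀ - s * w) - W x₀) / (2 * ε) with hV
  set A : ℝ → ℝ := fun s => ∫ w : ℝ, w * Real.exp (-w ^ 2 / (4 * ε) - V s w) with hA
  set B : ℝ → ℝ := fun s => ∫ w : ℝ, Real.exp (-w ^ 2 / (4 * ε) - V s w) with hB
  have hVbound : ∀ s w : ℝ, |V s w| ≤ M * |s| * |w| / (2 * ε) := by
    intro s w
    rw [hV]
    simp only
    rw [abs_div, abs_of_pos hε2]
    gcongr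
    calc |W (x₀ - s * w) - W x₀| ≤ M * |x₀ - s * w - x₀| := hWlip _ _
      _ = M * |s| * |w| := by
          rw [show x₀ - s * w - x₀ = -(s * w) by ring, abs_neg, abs_mul, mul_assoc]
  have hVcontw : ∀ s : ℝ, Continuous fun w => V s w := by
    intro s
    rw [hV]
    exact ((hWcont.comp (continuous_const.sub (continuous_const.mul continuous_id))).sub
      continuous_const).div_const _
  have hVconts : ∀ w : ℝ, Continuous fun s => V s w := by
    intro w
    rw [hV]
    exact ((hWcont.comp (continuous_const.sub (continuous_id.mul continuous_const))).sub
      continuous_const).div_const _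
  have hV0 : ∀ w : ℝ, V 0 w = 0 := by
    intro w; rw [hV]; simp
  -- the key pointwise identity
  set C : ℝ := Real.exp (-W x₀ / (2 * ε)) with hC
  have hC0 : 0 < C := Real.exp_pos _
  have key : ∀ t : ℝ, 0 < t →
      u x₀ t = (A (Real.sqrt t) / Real.sqrt t) / B (Real.sqrt t) := by
    intro t ht
    set s : ℝ := Real.sqrt t with hsdef
    have hs : 0 < s := Real.sqrt_pos.mpr ht
    have hs2 : s ^ 2 = t := Real.sq_sqrt ht.le
    have hEsplit : ∀ w : ℝ, -(s * w) ^ 2 / (4 * ε * t) - W (x₀ - s * w) / (2 * ε)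
        = -W x₀ / (2 * ε) + (-w ^ 2 / (4 * ε) - V s w) := by
      intro w
      rw [hV]; simp only
      rw [← hs2]
      field_simp
      ring
    have hN : (∫ y : ℝ, (x₀ - y) * Real.exp (-(x₀ - y) ^ 2 / (4 * ε * t) - W y / (2 * ε)))
        = t * C * A s := by
      set g : ℝ → ℝ := fun z => z * Real.exp (-z ^ 2 / (4 * ε * t) - W (x₀ - z) / (2 * ε))
        with hg
      have e1 : (∫ y : ℝ, (x₀ - y) * Real.exp (-(x₀ - y) ^ 2 / (4 * ε * t) - W y / (2 * ε)))
          = ∫ y : ℝ, g (x₀ - y) := by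
        congr 1; funext y; rw [hg]; simp only [sub_sub_cancel]
      rw [e1, integral_sub_left_eq_self g volume x₀]
      rw [show (∫ z : ℝ, g z) = s * ∫ w : ℝ, g (s * w) by
        rw [MeasureTheory.Measure.integral_comp_mul_left g s, abs_of_pos (inv_pos.mpr hs),
          smul_eq_mul]
        field_simp]
      have e2 : ∀ w : ℝ, g (s * w) = (s * C) * (w * Real.exp (-w ^ 2 / (4 * ε) - V s w)) := by
        intro w
        rw [hg]; simp only
        rw [hEsplit w, Real.exp_add, hC]
        ring
      simp only [e2]
      rw [MeasureTheory.integral_const_mul]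
      rw [hA]
      rw [← hs2]
      ring
    have hD : (∫ y : ℝ, Real.exp (-(x₀ - y) ^ 2 / (4 * ε * t) - W y / (2 * ε)))
        = s * C * B s := by
      set g : ℝ → ℝ := fun z => Real.exp (-z ^ 2 / (4 * ε * t) - W (x₀ - z) / (2 * ε))
        with hg
      have e1 : (∫ y : ℝ, Real.exp (-(x₀ - y) ^ 2 / (4 * ε * t) - W y / (2 * ε)))
          = ∫ y : ℝ, g (x₀ - y) := by
        congr 1; funext y; rw [hg]; simp only [sub_sub_cancel]
      rw [e1, integral_sub_left_eq_self g volume x₀]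
      rw [show (∫ z : ℝ, g z) = s * ∫ w : ℝ, g (s * w) by
        rw [MeasureTheory.Measure.integral_comp_mul_left g s, abs_of_pos (inv_pos.mpr hs),
          smul_eq_mul]
        field_simp]
      have e2 : ∀ w : ℝ, g (s * w) = C * Real.exp (-w ^ 2 / (4 * ε) - V s w) := by
        intro w
        rw [hg]; simp only
        rw [hEsplit w, Real.exp_add, hC]
      simp only [e2]
      rw [MeasureTheory.integral_const_mul, hB]
      ring
    rw [hu x₀ t ht, hN, hD]
    have htC : t * C ≠ 0 := by positivity
    rw [show t * (s * C * B s) = (t * C) * (s * B s) by ring,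
      show t * C * A s = (t * C) * A s by ring,
      mul_div_mul_left _ _ htC, div_div]
  -- the Gaussian integral
  set I₀ : ℝ := ∫ w : ℝ, Real.exp (-b * w ^ 2) with hI₀
  have hI₀pos : 0 < I₀ := by
    rw [hI₀, integral_gaussian]
    exact Real.sqrt_pos.mpr (div_pos Real.pi_pos hb)
  set G : Filter ℝ := nhdsWithin 0 (Set.Ioi 0) with hG
  have hsmall : ∀ᶠ s in G, s ∈ Set.Ioo (0:ℝ) 1 := by
    rw [hG]
    exact Ioo_mem_nhdsGT one_pos
  have hVb1 : ∀ s w : ℝ, s ∈ Set.Ioo (0:ℝ) 1 → |V s w| ≤ M / (2 * ε) * |w| := by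
    intro s w hs
    have habs : |s| ≤ 1 := by rw [abs_of_pos hs.1]; exact hs.2.le
    calc |V s w| ≤ M * |s| * |w| / (2 * ε) := hVbound s w
      _ ≤ M * 1 * |w| / (2 * ε) := by gcongr
      _ = M / (2 * ε) * |w| := by ring
  -- limit of B
  have hBlim : Tendsto B G (nhds I₀) := by
    rw [hB, hI₀]
    apply tendsto_integral_filter_of_dominated_convergence
      (bound := fun w => Real.exp (-b * w ^ 2 + M / (2 * ε) * |w|))
    · filter_upwards with s
      exact (Continuous.aestronglyMeasurable (by
        exact (((continuous_pow 2).neg.div_const _).sub (hVcontw s)).rexp))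
    · filter_upwards [hsmall] with s hs
      filter_upwards with w
      rw [Real.norm_eq_abs, abs_of_pos (Real.exp_pos _)]
      apply Real.exp_le_exp.mpr
      rw [hexp w]
      have h1 : -V s w ≤ |V s w| := neg_le_abs _
      have h3 := hVb1 s w hs
      linarith
    · have := hopf_master_integrable hb (M / (2 * ε)) 0
      simpa using this
    · filter_upwards with w
      have hc : Continuous fun s => Real.exp (-w ^ 2 / (4 * ε) - V s w) :=
        ((continuous_const.sub (hVconts w)).rexp)
      have := (hc.tendsto 0).mono_left (show G ≤ nhds (0:ℝ) from hG ▸ nhdsWithin_le_nhds)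
      convert this using 2
      rw [hV0 w, sub_zero, hexp w]
  -- limit of A s / s
  set Φ : ℝ → ℝ → ℝ := fun s w =>
    (w * Real.exp (-b * w ^ 2)) * ((Real.exp (-V s w) - 1) * s⁻¹) with hΦ
  have hsplit : ∀ s w : ℝ, w * Real.exp (-w ^ 2 / (4 * ε) - V s w)
      = w * Real.exp (-b * w ^ 2) * Real.exp (-V s w) := by
    intro s w
    rw [hexp w, sub_eq_add_neg, Real.exp_add]
    ring
  have hAeq : ∀ᶠ s in G, A s / Real.sqrt (s ^ 2) = A s / Real.sqrt (s ^ 2) := by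
    filter_upwards with s; rfl
  have hAs : ∀ s : ℝ, 0 < s → A s / s = ∫ w : ℝ, Φ s w := by
    intro s hs
    have hfint : Integrable (fun w : ℝ => w * Real.exp (-w ^ 2 / (4 * ε) - V s w)) := by
      refine (hopf_master_integrable hb (M * |s| / (2 * ε)) 1).mono' ?_ ?_
      · exact Continuous.aestronglyMeasurable (by
          exact continuous_id.mul (((continuous_pow 2).neg.div_const _).sub (hVcontw s)).rexp)
      · filter_upwards with w
        rw [Real.norm_eq_abs, abs_mul, abs_of_pos (Real.exp_pos _), pow_one]
        apply mul_le_mul_of_nonneg_left _ (abs_nonneg w)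
        apply Real.exp_le_exp.mpr
        rw [hexp w]
        have h1 : -V s w ≤ |V s w| := neg_le_abs _
        have h2 : |V s w| ≤ M * |s| * |w| / (2 * ε) := hVbound s w
        have h3 : M * |s| * |w| / (2 * ε) = M * |s| / (2 * ε) * |w| := by ring
        linarith [h3 ▸ h2]
    have hgint : Integrable (fun w : ℝ => w * Real.exp (-b * w ^ 2)) :=
      integrable_mul_exp_neg_mul_sq hb
    have hm1 : ∫ w : ℝ, w * Real.exp (-b * w ^ 2) = 0 := hopf_moment1 hb
    rw [hA]
    simp only
    rw [div_eq_mul_inv, show (∫ w : ℝ, w * Real.exp (-w ^ 2 / (4 * ε) - V s w))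
      = (∫ w : ℝ, w * Real.exp (-w ^ 2 / (4 * ε) - V s w)) - 0 by ring, ← hm1,
      ← MeasureTheory.integral_sub hfint hgint, ← MeasureTheory.integral_mul_const]
    congr 1
    funext w
    rw [hΦ]
    simp only
    rw [hsplit s w]
    ring
  have hΦlim : Tendsto (fun s => ∫ w : ℝ, Φ s w) G
      (nhds (∫ w : ℝ, (w * Real.exp (-b * w ^ 2)) * (w * a / (2 * ε)))) := by
    apply tendsto_integral_filter_of_dominated_convergence
      (bound := fun w => M / (2 * ε) * (|w| ^ 2 * Real.exp (-b * w ^ 2 + M / (2 * ε) * |w|)))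
    · filter_upwards with s
      apply Continuous.aestronglyMeasurable
      rw [hΦ]
      exact (continuous_id.mul ((continuous_const.mul (continuous_pow 2) : Continuous fun w : ℝ => -b * w ^ 2).rexp)).mul
        ((((hVcontw s).neg.rexp).sub continuous_const).mul continuous_const)
    · filter_upwards [hsmall] with s hs
      filter_upwards with w
      have hs0 : 0 < s := hs.1
      have h1 : |Real.exp (-V s w) - 1| ≤ |V s w| * Real.exp |V s w| := by
        simpa [abs_neg] using hopf_exp_sub_one (-V s w)
      have h2 : |V s w| ≤ M * s * |w| / (2 * ε) := by
        have := hVbound s w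
        rwa [abs_of_pos hs0] at this
      have h4 : |V s w| ≤ M / (2 * ε) * |w| := hVb1 s w hs
      have h3 : Real.exp |V s w| ≤ Real.exp (M / (2 * ε) * |w|) := Real.exp_le_exp.mpr h4
      have h5 : |Real.exp (-V s w) - 1| ≤ (M * s * |w| / (2 * ε)) * Real.exp (M / (2 * ε) * |w|) :=
        h1.trans (mul_le_mul h2 h3 (Real.exp_pos _).le (by positivity))
      rw [hΦ]
      simp only
      rw [Real.norm_eq_abs, abs_mul, abs_mul, abs_mul, abs_of_pos (Real.exp_pos _),
        abs_of_nonneg (inv_nonneg.mpr hs0.le)]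
      calc |w| * Real.exp (-b * w ^ 2) * (|Real.exp (-V s w) - 1| * s⁻¹)
          ≤ |w| * Real.exp (-b * w ^ 2) *
            ((M * s * |w| / (2 * ε)) * Real.exp (M / (2 * ε) * |w|) * s⁻¹) := by
            apply mul_le_mul_of_nonneg_left _ (by positivity)
            exact mul_le_mul_of_nonneg_right h5 (inv_nonneg.mpr hs0.le)
        _ = M / (2 * ε) * ((|w| ^ 2 * (Real.exp (-b * w ^ 2) * Real.exp (M / (2 * ε) * |w|)))
              * (s * s⁻¹)) := by ring
        _ = M / (2 * ε) * (|w| ^ 2 * Real.exp (-b * w ^ 2 + M / (2 * ε) * |w|)) := by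
            rw [mul_inv_cancel₀ hs0.ne', mul_one, ← Real.exp_add]
    · exact (hopf_master_integrable hb (M / (2 * ε)) 2).const_mul _
    · filter_upwards with w
      have hψ : HasDerivAt (fun s => Real.exp (-V s w)) (w * a / (2 * ε)) 0 := by
        have h1 : HasDerivAt (fun s : ℝ => s * w) w 0 := by
          simpa using hasDerivAt_mul_const (x := (0:ℝ)) w
        have h2 : HasDerivAt (fun s : ℝ => x₀ - s * w) (-w) 0 := h1.const_sub x₀
        have hWd' : HasDerivAt W a (x₀ - 0 * w) := by simpa using hWd
        have h3 : HasDerivAt (fun s : ℝ => W (x₀ - s * w)) (a * -w) 0 := by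
          have := hWd'.comp 0 h2
          simpa [Function.comp_def] using this
        have h4 := (((h3.sub_const (W x₀)).div_const (2 * ε)).neg).exp
        rw [hV]
        simp only
        convert h4 using 1
        · rfl
        simp only [Pi.neg_apply]
        rw [show x₀ - 0 * w = x₀ by ring, sub_self, zero_div, neg_zero, Real.exp_zero]
        field_simp
      have hslope := hasDerivAt_iff_tendsto_slope.mp hψ
      have hmono : G ≤ nhdsWithin (0:ℝ) {(0:ℝ)}ᶜ := by
        rw [hG]
        exact nhdsWithin_mono 0 (fun x hx => ne_of_gt hx)
      have hs2 := hslope.mono_left hmono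
      have heq : ∀ᶠ s in G, slope (fun s => Real.exp (-V s w)) 0 s
          = (Real.exp (-V s w) - 1) * s⁻¹ := by
        filter_upwards with s
        rw [slope_def_field, hV0 w, neg_zero, Real.exp_zero, div_eq_mul_inv, sub_zero]
      have := (hs2.congr' heq).const_mul (w * Real.exp (-b * w ^ 2))
      rw [hΦ]
      simpa [mul_comm, mul_assoc, mul_left_comm] using this
  have hIlim : (∫ w : ℝ, (w * Real.exp (-b * w ^ 2)) * (w * a / (2 * ε))) = a * I₀ := by
    have e1 : (∫ w : ℝ, (w * Real.exp (-b * w ^ 2)) * (w * a / (2 * ε)))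
        = ∫ w : ℝ, (a / (2 * ε)) * (w ^ 2 * Real.exp (-b * w ^ 2)) := by
      congr 1; funext w; ring
    rw [e1, MeasureTheory.integral_const_mul, hopf_moment2 hb, ← hI₀, hbdef]
    field_simp
    ring
  have hAlim : Tendsto (fun s => A s / s) G (nhds (a * I₀)) := by
    rw [← hIlim]
    apply hΦlim.congr'
    filter_upwards [self_mem_nhdsWithin] with s hs
    exact (hAs s hs).symm
  -- combine
  have hfinal : Tendsto (fun s => (A s / s) / B s) G (nhds a) := by
    have := hAlim.div hBlim hI₀pos.ne'
    rwa [mul_div_assoc, div_self hI₀pos.ne', mul_one] at this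
  have hsqrt : Tendsto Real.sqrt G G := by
    rw [hG]
    apply tendsto_nhdsWithin_of_tendsto_nhds_of_eventually_within
    · have := (Real.continuous_sqrt.tendsto 0).mono_left
        (nhdsWithin_le_nhds (s := Set.Ioi (0:ℝ)))
      rwa [Real.sqrt_zero] at this
    · filter_upwards [self_mem_nhdsWithin] with t ht
      exact Real.sqrt_pos.mpr ht
  have hcomp := hfinal.comp hsqrt
  apply hcomp.congr'
  filter_upwards [self_mem_nhdsWithin] with t ht
  exact (key t ht).symm
end
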